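/- arXiv:1701.07694 — 2 statements merged into one kernel-verified Lean document; each statement's English description precedes it below -/
import Mathlib

section
/- If N ≥ 2, the characteristic polynomial of T equals X^{N−2} · (X² − R·X − S²/4) in ℂ[X]; consequently T has the two eigenvalues (R ± √(R² + S²))/2 and the eigenvalue 0 with multiplicity N − 2. -/
open Matrix Polynomial

lemma my_eval_charpoly {m : Type*} [Fintype m] [DecidableEq m]
    {K : Type*} [CommRing K] (M : Matrix m m K) (r : K) :
    (M.charpoly).eval r = (r • (1 : Matrix m m K) - M).det := by
  rw [Matrix.charpoly, ← Polynomial.coe_evalRingHom, RingHom.map_det]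
  congr 1
  ext i j
  by_cases h : i = j
  · subst h
    simp [Matrix.charmatrix_apply_eq, Matrix.one_apply]
  · simp [Matrix.charmatrix_apply_ne _ _ _ h, Matrix.one_apply_ne h]

/-- For `N ≥ 2`, the characteristic polynomial of `T = (1/2)(e_n aᴴ + a e_nᴴ)` equals
`X^(N-2) * (X² - R X - S²/4)`; consequently `T` has the two eigenvalues
`(R ± √(R² + S²))/2` and the eigenvalue `0` with multiplicity `N - 2`. -/
theorem stmt_2 (N : ℕ) (hN : 2 ≤ N) (n : Fin N) (a : Fin N → ℂ)
    (R S : ℝ) (hR : R = (a n).re)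
    (hS : S ^ 2 = ∑ m ∈ Finset.univ.erase n, ‖a m‖ ^ 2) (hS0 : 0 ≤ S) :
    ∀ T : Matrix (Fin N) (Fin N) ℂ,
      T = (1 / 2 : ℂ) •
          (vecMulVec (Pi.single n 1) (star a) + vecMulVec a (star (Pi.single n 1))) →
      T.charpoly = X ^ (N - 2) * (X ^ 2 - C (R : ℂ) * X - C ((S ^ 2 / 4 : ℝ) : ℂ)) ∧
      T.charpoly.IsRoot (((R + Real.sqrt (R ^ 2 + S ^ 2)) / 2 : ℝ) : ℂ) ∧
      T.charpoly.IsRoot (((R - Real.sqrt (R ^ 2 + S ^ 2)) / 2 : ℝ) : ℂ) ∧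
      N - 2 ≤ T.charpoly.rootMultiplicity 0 := by
  intro T hT
  set U : Matrix (Fin N) (Fin 2) ℂ :=
    Matrix.of (fun i k => if k = 0 then (if i = n then (1:ℂ) else 0) else (1/2 : ℂ) * a i) with hU
  set V : Matrix (Fin 2) (Fin N) ℂ :=
    Matrix.of (fun k j => if k = 0 then (1/2 : ℂ) * star (a j) else (if j = n then (1:ℂ) else 0)) with hV
  have hTUV : T = U * V := by
    rw [hT]
    ext i j
    simp only [Matrix.mul_apply, Fin.sum_univ_two, Matrix.vecMulVec_apply, hU, hV,
      Matrix.of_apply, Matrix.smul_apply, Matrix.add_apply, Pi.single_apply, Pi.star_apply,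
      star_one, star_zero, if_true, if_false, apply_ite (star : ℂ → ℂ)]
    norm_num
    by_cases hin : i = n <;> by_cases hjn : j = n <;>
      simp [hin, hjn] <;> ring
  set c : ℂ := a n with hc
  have hRc : (R : ℂ) = (c + (starRingEnd ℂ) c) / 2 := by
    rw [hR]; exact Complex.re_eq_add_conj c
  have e00 : (V * U) 0 0 = (1/2 : ℂ) * star c := by
    simp [Matrix.mul_apply, hU, hV, Pi.single_apply, c]
  have e10 : (V * U) 1 0 = 1 := by
    simp [Matrix.mul_apply, hU, hV, Pi.single_apply]
  have e11 : (V * U) 1 1 = (1/2 : ℂ) * c := by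
    simp [Matrix.mul_apply, hU, hV, Pi.single_apply, c]
  have e01 : (V * U) 0 1 = (1/4 : ℂ) * (((S^2 : ℝ) : ℂ) + star c * c) := by
    have h1 : ∀ j, ((1/2 : ℂ) * star (a j)) * ((1/2 : ℂ) * a j)
        = (1/4 : ℂ) * ((Complex.normSq (a j) : ℝ) : ℂ) := by
      intro j
      rw [show ((Complex.normSq (a j) : ℝ) : ℂ) = star (a j) * a j by
        rw [mul_comm]; exact (Complex.mul_conj (a j)).symm]
      ring
    have h2 : ∑ j, ((Complex.normSq (a j) : ℝ) : ℂ)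
        = ((S^2 : ℝ) : ℂ) + star c * c := by
      rw [show (star c * c : ℂ) = ((Complex.normSq c : ℝ) : ℂ) by
        rw [mul_comm]; exact Complex.mul_conj c]
      rw [← Complex.ofReal_add, ← Complex.ofReal_sum]
      congr 1
      rw [hS, ← Finset.sum_erase_add _ _ (Finset.mem_univ n)]
      exact congrArg (· + Complex.normSq (a n))
        (Finset.sum_congr rfl fun m _ => (Complex.sq_norm (a m)).symm)
    calc (V * U) 0 1 = ∑ j, ((1/2 : ℂ) * star (a j)) * ((1/2 : ℂ) * a j) := by
          simp [Matrix.mul_apply, hU, hV]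
      _ = (1/4 : ℂ) * ∑ j, ((Complex.normSq (a j) : ℝ) : ℂ) := by
          simp_rw [h1]; rw [Finset.mul_sum]
      _ = _ := by rw [h2]
  obtain ⟨k, hk⟩ := Nat.exists_eq_add_of_le hN
  have hNk : N - 2 = k := by omega
  have hkey : ∀ x : ℂ, x ≠ 0 →
      Polynomial.eval x T.charpoly
        = x ^ (N-2) * (x^2 - (R:ℂ)*x - ((S^2/4 : ℝ) : ℂ)) := by
    intro x hx
    rw [my_eval_charpoly, hTUV]
    have h1 : x • (1 : Matrix (Fin N) (Fin N) ℂ) - U * V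
        = x • ((1 : Matrix (Fin N) (Fin N) ℂ) - U * (x⁻¹ • V)) := by
      rw [smul_sub, Matrix.mul_smul, smul_smul, mul_inv_cancel₀ hx, one_smul]
    rw [h1, Matrix.det_smul, Matrix.det_one_sub_mul_comm, Matrix.smul_mul,
      Matrix.det_fin_two]
    simp only [Matrix.sub_apply, Matrix.smul_apply, Matrix.one_apply_eq,
      Matrix.one_apply_ne (show (0:Fin 2) ≠ 1 by decide),
      Matrix.one_apply_ne (show (1:Fin 2) ≠ 0 by decide),
      e00, e10, e11, e01, smul_eq_mul]
    rw [hRc]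
    have hxN : x ^ N = x ^ (N - 2) * x ^ 2 := by
      rw [hNk, hk]; ring
    rw [Fintype.card_fin, hxN]
    push_cast
    field_simp
    simp only [Complex.star_def]
    ring
  have hp : T.charpoly
      = X ^ (N - 2) * (X ^ 2 - C (R : ℂ) * X - C ((S ^ 2 / 4 : ℝ) : ℂ)) := by
    apply Polynomial.eq_of_infinite_eval_eq
    apply Set.Infinite.mono _ ((Set.finite_singleton (0:ℂ)).infinite_compl)
    intro x hx
    have hx0 : x ≠ 0 := hx
    simp only [Set.mem_setOf_eq, eval_mul, eval_pow, eval_sub, eval_C, eval_X]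
    rw [hkey x hx0]
  refine ⟨hp, ?_, ?_, ?_⟩
  · set t := Real.sqrt (R ^ 2 + S ^ 2) with hts
    have ht : t ^ 2 = R ^ 2 + S ^ 2 :=
      Real.sq_sqrt (by positivity)
    have hroot : ((R + t) / 2) ^ 2 - R * ((R + t) / 2) - S ^ 2 / 4 = 0 := by
      linear_combination (1/4 : ℝ) * ht
    unfold Polynomial.IsRoot
    rw [hp]
    simp only [eval_mul, eval_pow, eval_sub, eval_C, eval_X]
    have : ((((R + t) / 2 : ℝ) : ℂ))^2 - (R:ℂ) * (((R + t) / 2 : ℝ) : ℂ)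
        - ((S^2/4 : ℝ) : ℂ) = 0 := by
      push_cast
      have := congrArg (Complex.ofReal) hroot
      push_cast at this
      linear_combination this
    rw [this, mul_zero]
  · set t := Real.sqrt (R ^ 2 + S ^ 2) with hts
    have ht : t ^ 2 = R ^ 2 + S ^ 2 :=
      Real.sq_sqrt (by positivity)
    have hroot : ((R - t) / 2) ^ 2 - R * ((R - t) / 2) - S ^ 2 / 4 = 0 := by
      linear_combination (1/4 : ℝ) * ht
    unfold Polynomial.IsRoot
    rw [hp]
    simp only [eval_mul, eval_pow, eval_sub, eval_C, eval_X]
    have : ((((R - t) / 2 : ℝ) : ℂ))^2 - (R:ℂ) * (((R - t) / 2 : ℝ) : ℂ)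
        - ((S^2/4 : ℝ) : ℂ) = 0 := by
      push_cast
      have := congrArg (Complex.ofReal) hroot
      push_cast at this
      linear_combination this
    rw [this, mul_zero]
  · have hne : T.charpoly ≠ 0 := (Matrix.charpoly_monic T).ne_zero
    rw [Polynomial.le_rootMultiplicity_iff hne]
    rw [map_zero, sub_zero, hp]
    exact Dvd.intro _ rfl
end

section
/- For every real number λ satisfying λ² = R·λ + S²/4, the vector v = a + (2λ − a_n) e_n satisfies T *ᵥ v = λ • v; the n-th entry of v equals 2λ, so v ≠ 0 whenever λ ≠ 0. In particular the two real roots λ^± = (R ± √(R² + S²))/2 of this quadratic are eigenvalues of T with eigenvectors v^± = a + (2λ^± − a_n) e_n when S > 0. -/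
open Matrix

lemma vmv_mulVec {N : ℕ} (w u v : Fin N → ℂ) :
    (vecMulVec w u) *ᵥ v = (u ⬝ᵥ v) • w := by
  funext i
  simp [Matrix.mulVec, dotProduct, vecMulVec_apply, Finset.mul_sum, mul_comm, mul_assoc,
    mul_left_comm]

lemma single_dot {N : ℕ} (n : Fin N) (v : Fin N → ℂ) :
    star (Pi.single n 1 : Fin N → ℂ) ⬝ᵥ v = v n := by
  simp [dotProduct, Pi.single_apply, apply_ite]

/-- For every real `λ` with `λ² = R λ + S²/4`, the vector `v = a + (2λ - a_n) e_n` satisfies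
`T *ᵥ v = λ • v`, has `v n = 2λ`, hence is nonzero whenever `λ ≠ 0`.  In particular, when
`S > 0`, the two real roots `λ± = (R ± √(R² + S²))/2` are eigenvalues of `T` with
eigenvectors `v± = a + (2λ± - a_n) e_n`. -/
theorem stmt_3 (N : ℕ) (hN : 1 ≤ N) (n : Fin N) (a : Fin N → ℂ)
    (R S : ℝ) (hR : R = (a n).re)
    (hS : S ^ 2 = ∑ m ∈ Finset.univ.erase n, ‖a m‖ ^ 2) (hS0 : 0 ≤ S)
    (T : Matrix (Fin N) (Fin N) ℂ)
    (hT : T = (1 / 2 : ℂ) •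
        (vecMulVec (Pi.single n 1) (star a) + vecMulVec a (star (Pi.single n 1)))) :
    (∀ lam : ℝ, lam ^ 2 = R * lam + S ^ 2 / 4 →
      ∀ v : Fin N → ℂ, v = a + (((2 * lam : ℝ) : ℂ) - a n) • (Pi.single n 1 : Fin N → ℂ) →
        T.mulVec v = (lam : ℂ) • v ∧ v n = ((2 * lam : ℝ) : ℂ) ∧ (lam ≠ 0 → v ≠ 0)) ∧
    (0 < S →
      ∀ lam : ℝ,
        (lam = (R + Real.sqrt (R ^ 2 + S ^ 2)) / 2 ∨
          lam = (R - Real.sqrt (R ^ 2 + S ^ 2)) / 2) →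
        ∀ v : Fin N → ℂ, v = a + (((2 * lam : ℝ) : ℂ) - a n) • (Pi.single n 1 : Fin N → ℂ) →
          T.mulVec v = (lam : ℂ) • v ∧ v ≠ 0) := by
  have main : ∀ lam : ℝ, lam ^ 2 = R * lam + S ^ 2 / 4 →
      ∀ v : Fin N → ℂ, v = a + (((2 * lam : ℝ) : ℂ) - a n) • (Pi.single n 1 : Fin N → ℂ) →
        T.mulVec v = (lam : ℂ) • v ∧ v n = ((2 * lam : ℝ) : ℂ) ∧ (lam ≠ 0 → v ≠ 0) := by
    intro lam hlam v hv
    have hvn : v n = ((2 * lam : ℝ) : ℂ) := by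
      rw [hv]; simp
    have hvm : ∀ m, m ≠ n → v m = a m := by
      intro m hm
      rw [hv]; simp [Pi.single_apply, hm]
    refine ⟨?_, hvn, ?_⟩
    · -- dot product computation
      have hdot : star a ⬝ᵥ v = (S ^ 2 : ℝ) + ((2 * lam : ℝ) : ℂ) * star (a n) := by
        have : star a ⬝ᵥ v = ∑ m, star (a m) * v m := by
          simp [dotProduct]
        rw [this, ← Finset.add_sum_erase _ _ (Finset.mem_univ n), hvn]
        have : ∀ m ∈ Finset.univ.erase n, star (a m) * v m =
            ((‖a m‖ ^ 2 : ℝ) : ℂ) := by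
          intro m hm
          rw [hvm m (Finset.mem_erase.mp hm).1]
          rw [Complex.star_def, mul_comm, Complex.mul_conj, Complex.normSq_eq_norm_sq]
        rw [Finset.sum_congr rfl this, ← Complex.ofReal_sum, ← hS]
        ring
      rw [hT, smul_mulVec, add_mulVec, vmv_mulVec, vmv_mulVec, single_dot, hdot, hvn]
      rw [hv]
      funext i
      by_cases hi : i = n
      · simp only [hi, Pi.add_apply, Pi.smul_apply, Pi.single_eq_same, smul_eq_mul, mul_one]
        have hRe : a n + star (a n) = (2 * R : ℝ) := by
          rw [Complex.star_def, Complex.add_conj, hR]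
        have hstar : star (a n) = (2 * R : ℝ) - a n := by
          rw [← hRe]; ring
        rw [hstar]
        have hlamC : ((lam : ℂ)) ^ 2 = (R : ℂ) * lam + (S : ℂ) ^ 2 / 4 := by
          exact_mod_cast congrArg (Complex.ofReal) hlam
        push_cast
        push_cast at hlamC
        linear_combination (-2:ℂ) * hlamC
      · simp only [Pi.add_apply, Pi.smul_apply, Pi.single_apply, if_neg hi, smul_eq_mul,
          mul_zero, add_zero]
        push_cast
        ring
    · intro hl h0
      have := congrFun h0 n
      rw [hvn] at this
      simp only [Pi.zero_apply, Complex.ofReal_eq_zero] at this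
      exact hl (by linarith)
  refine ⟨main, ?_⟩
  intro hSpos lam hlam v hv
  have hsq : Real.sqrt (R ^ 2 + S ^ 2) ^ 2 = R ^ 2 + S ^ 2 :=
    Real.sq_sqrt (by positivity)
  have hquad : lam ^ 2 = R * lam + S ^ 2 / 4 := by
    rcases hlam with h | h <;> subst h <;> nlinarith [hsq]
  have hlam0 : lam ≠ 0 := by
    intro h
    rw [h] at hquad
    have : S ^ 2 = 0 := by linarith
    nlinarith
  obtain ⟨h1, _, h3⟩ := main lam hquad v hv
  exact ⟨h1, h3 hlam0⟩
end
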